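/- An integral domain R is completely integrally closed and w-stable if and only if R is a Krull domain; equivalently, R is completely integrally closed and w-divisorial (w = v) if and only if R is a Krull domain. -/

import Mathlib

noncomputable section

section Defs

variable (R K : Type*) [CommRing R] [CommRing K] [Algebra R K]

/-- The residual `(E : F) = {x ∈ K : xF ⊆ E}` of two `R`-submodules of `K`. -/
def resid (E F : Submodule R K) : Submodule R K where
  carrier := {x : K | ∀ y ∈ F, x * y ∈ E}
  add_mem' := by
    intro a b ha hb y hy
    simpa only [Set.mem_setOf_eq, add_mul] using E.add_mem (ha y hy) (hb y hy)
  zero_mem' := by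
    intro y hy
    simp
  smul_mem' := by
    intro c x hx y hy
    simpa [smul_mul_assoc] using E.smul_mem c (hx y hy)

/-- The image of an ideal of `R` as an `R`-submodule of `K`. -/
def idealToSub (I : Ideal R) : Submodule R K :=
  Submodule.map (Algebra.linearMap R K) I

end Defs

/-- A semistar operation on an integral domain `R` with quotient field `K`. -/
structure SemistarOp (R K : Type*) [CommRing R] [Field K] [Algebra R K] where
  star : Submodule R K → Submodule R K
  star_smul : ∀ x : K, x ≠ 0 → ∀ E : Submodule R K, E ≠ ⊥ →
    star (Submodule.span R {x} * E) = Submodule.span R {x} * star E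
  mono : ∀ E F : Submodule R K, E ≠ ⊥ → E ≤ F → star E ≤ star F
  le_star : ∀ E : Submodule R K, E ≠ ⊥ → E ≤ star E
  idem : ∀ E : Submodule R K, E ≠ ⊥ → star (star E) = star E

section Ops

variable (R K : Type*) [CommRing R] [Field K] [Algebra R K]

/-- The `v`-operation (divisorial closure) `E ↦ (R : (R : E))`. -/
def vop (E : Submodule R K) : Submodule R K := resid R K 1 (resid R K 1 E)

/-- The `t`-operation, the finite-type version of `v`. -/
def top (E : Submodule R K) : Submodule R K :=
  ⨆ (F : Submodule R K) (_ : F.FG ∧ F ≠ ⊥ ∧ F ≤ E), vop R K F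

/-- The `w`-operation `E ↦ ⋃ {(E : F) : F f.g. nonzero with F^t = R}`. -/
def wop (E : Submodule R K) : Submodule R K :=
  ⨆ (F : Submodule R K) (_ : F.FG ∧ F ≠ ⊥ ∧ top R K F = 1), resid R K E F

/-- `M` is a maximal proper `f`-closed ideal (e.g. a `⋆`-maximal ideal). -/
def IsOpMaxIdeal (f : Submodule R K → Submodule R K) (M : Submodule R K) : Prop :=
  M ≠ ⊥ ∧ M < 1 ∧ f M = M ∧
    ∀ J : Submodule R K, J ≠ ⊥ → J < 1 → f J = J → M ≤ J → M = J

/-- The localization `E R_P` of a submodule `E` at a prime `P`, inside `K`. -/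
def locSub (P : Ideal R) (E : Submodule R K) : Submodule R K :=
  Submodule.span R {x : K | ∃ s : R, s ∉ P ∧ s • x ∈ E}

/-- The subring of `K` determined by the submodule `T` is a stable domain:
every nonzero ideal `E` of `T` is invertible in `(E : E)`. -/
def SubringStable (T : Submodule R K) : Prop :=
  ∀ E : Submodule R K, E ≠ ⊥ → E ≤ T → T * E ≤ E →
    E * resid R K (resid R K E E) E = resid R K E E

/-- The subring of `K` determined by `T` is a divisorial domain: every nonzero
fractional ideal of `T` is divisorial. -/
def SubringDivisorial (T : Submodule R K) : Prop :=
  ∀ J : Submodule R K, J ≠ ⊥ → T * J ≤ J →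
    (∃ x : K, x ≠ 0 ∧ ∀ y ∈ J, x * y ∈ T) →
    resid R K T (resid R K T J) = J

/-- The subring of `K` determined by `T` is `v`-coherent: for every nonzero
finitely generated ideal `I = S·T` of `T`, the ideal `(T : I)` is `v`-finite. -/
def SubringVCoherent (T : Submodule R K) : Prop :=
  ∀ S : Submodule R K, S.FG → S ≠ ⊥ → S ≤ T →
    ∃ H : Submodule R K, H.FG ∧ H ≠ ⊥ ∧
      resid R K T (S * T) = resid R K T (resid R K T (H * T))

/-- `R` has finite character with respect to the maximal ideals singled out by `f`. -/
def OpFiniteCharacter (f : Submodule R K → Submodule R K) : Prop :=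
  ∀ I : Submodule R K, I ≠ ⊥ → I ≤ 1 →
    {M : Submodule R K | IsOpMaxIdeal R K f M ∧ I ≤ M}.Finite

/-- Every nonzero finitely generated ideal is `t`-invertible (PvMD). -/
def IsPvMDsub : Prop :=
  ∀ G : Submodule R K, G.FG → G ≠ ⊥ → G ≤ 1 →
    top R K (G * resid R K 1 G) = 1

end Ops

namespace SemistarOp

variable {R K : Type*} [CommRing R] [Field K] [Algebra R K] (s : SemistarOp R K)

/-- `⋆`-stability for the ideals of the subring determined by `T`. -/
def StarStableOver (T : Submodule R K) : Prop :=
  ∀ E : Submodule R K, E ≠ ⊥ → E ≤ T → T * E ≤ E →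
    s.star (s.star E * resid R K (resid R K (s.star E) (s.star E)) (s.star E))
      = resid R K (s.star E) (s.star E)

/-- `R` is `⋆`-stable: each nonzero ideal `I` is such that `I^⋆` is
`⋆̇`-invertible in `(I^⋆ : I^⋆)`. -/
def StarStable : Prop := s.StarStableOver (1 : Submodule R K)

/-- `⋆` is of finite type. -/
def FinType : Prop :=
  ∀ E : Submodule R K, E ≠ ⊥ →
    s.star E = ⨆ (F : Submodule R K) (_ : F.FG ∧ F ≠ ⊥ ∧ F ≤ E), s.star F

/-- `⋆ = ⋆̃`: the operation is spectral and of finite type, i.e. it is given by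
`E^⋆ = ⋃ {(E : F) : F f.g. nonzero with F^⋆ = R}`. -/
def IsSpectralFT : Prop :=
  ∀ E : Submodule R K, E ≠ ⊥ →
    s.star E = ⨆ (F : Submodule R K) (_ : F.FG ∧ F ≠ ⊥ ∧ s.star F = 1), resid R K E F

/-- The `⋆`-integral closure `R^{[⋆]} = ⋃ {(F^⋆ : F^⋆) : F f.g. nonzero}`. -/
def starIntClosure : Submodule R K :=
  ⨆ (F : Submodule R K) (_ : F.FG ∧ F ≠ ⊥), resid R K (s.star F) (s.star F)

end SemistarOp


section MoreOps

variable (R K : Type*) [CommRing R] [Field K] [Algebra R K]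

/-- `R` is `w`-stable: for each nonzero ideal `I`, `I^w` is invertible in
`(I^w : I^w)` with respect to the restriction of `w`. -/
def WStable : Prop :=
  ∀ I : Submodule R K, I ≠ ⊥ → I ≤ 1 →
    wop R K (wop R K I * resid R K (resid R K (wop R K I) (wop R K I)) (wop R K I))
      = resid R K (wop R K I) (wop R K I)

/-- `R` is completely integrally closed in its quotient field `K`. -/
def CICsub : Prop :=
  ∀ x : K, (∃ c : R, c ≠ 0 ∧ ∀ n : ℕ, c • x ^ n ∈ (1 : Submodule R K)) →
    x ∈ (1 : Submodule R K)

/-- `R` is `w`-divisorial: `w = v` on nonzero fractional ideals. -/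
def WDivisorial : Prop :=
  ∀ J : Submodule R K, J ≠ ⊥ →
    (∃ d : R, d ≠ 0 ∧ ∀ x ∈ J, d • x ∈ (1 : Submodule R K)) →
    wop R K J = vop R K J

/-- `R` is a Krull domain: completely integrally closed with the ascending chain
condition on (integral) divisorial ideals. -/
def IsKrullSub : Prop :=
  CICsub R K ∧
    ∀ c : ℕ → Submodule R K,
      (∀ n, c n ≠ ⊥ ∧ c n ≤ 1 ∧ vop R K (c n) = c n) → Monotone c →
        ∃ n, ∀ m, n ≤ m → c m = c n

end MoreOps

end

set_option linter.unusedSectionVars false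
set_option linter.unusedVariables false
namespace P15
variable {R K : Type*} [CommRing R] [IsDomain R] [Field K] [Algebra R K] [IsFractionRing R K]

theorem mem_resid {E F : Submodule R K} {x : K} :
    x ∈ resid R K E F ↔ ∀ y ∈ F, x * y ∈ E := Iff.rfl

theorem one_mem_one : (1 : K) ∈ (1 : Submodule R K) :=
  Submodule.mem_one.mpr ⟨1, map_one _⟩

theorem mul_mem_one {x y : K} (hx : x ∈ (1 : Submodule R K)) (hy : y ∈ (1 : Submodule R K)) :
    x * y ∈ (1 : Submodule R K) := by
  obtain ⟨a, rfl⟩ := Submodule.mem_one.mp hx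
  obtain ⟨b, rfl⟩ := Submodule.mem_one.mp hy
  exact Submodule.mem_one.mpr ⟨a * b, by simp⟩

theorem one_mul_mem {x y : K} {E : Submodule R K} (hx : x ∈ (1 : Submodule R K)) (hy : y ∈ E) :
    x * y ∈ E := by
  obtain ⟨a, rfl⟩ := Submodule.mem_one.mp hx
  simpa [Algebra.smul_def] using E.smul_mem a hy

theorem resid_mono {E E' F : Submodule R K} (h : E ≤ E') : resid R K E F ≤ resid R K E' F :=
  fun _ hx y hy => h (hx y hy)

theorem resid_anti {E F F' : Submodule R K} (h : F' ≤ F) : resid R K E F ≤ resid R K E F' :=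
  fun _ hx y hy => hx y (h hy)

theorem resid_one_one : resid R K 1 1 = (1 : Submodule R K) := by
  apply le_antisymm
  · intro x hx
    simpa using hx 1 one_mem_one
  · intro x hx y hy
    exact mul_mem_one hx hy

theorem one_le_resid_one {F : Submodule R K} (h : F ≤ 1) : (1 : Submodule R K) ≤ resid R K 1 F :=
  fun _ hx y hy => mul_mem_one hx (h hy)

theorem le_vop {E : Submodule R K} : E ≤ vop R K E := by
  intro x hx y hy
  rw [mul_comm]
  exact hy x hx

theorem vop_mono {E E' : Submodule R K} (h : E ≤ E') : vop R K E ≤ vop R K E' :=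
  resid_anti (resid_anti h)

theorem resid_one_vop {E : Submodule R K} : resid R K 1 (vop R K E) = resid R K 1 E := by
  apply le_antisymm
  · exact resid_anti le_vop
  · intro x hx y hy
    rw [mul_comm]
    exact hy x hx

theorem vop_le_one {E : Submodule R K} (h : E ≤ 1) : vop R K E ≤ 1 := by
  have h1 : (1 : Submodule R K) ≤ resid R K 1 E := one_le_resid_one h
  calc vop R K E ≤ resid R K 1 1 := resid_anti h1
    _ = 1 := resid_one_one

theorem vop_idem {E : Submodule R K} : vop R K (vop R K E) = vop R K E := by
  rw [show vop R K (vop R K E) = resid R K 1 (resid R K 1 (vop R K E)) from rfl,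
    resid_one_vop]
  rfl

theorem vop_ne_bot {E : Submodule R K} (h : E ≠ ⊥) : vop R K E ≠ ⊥ :=
  fun hb => h (le_bot_iff.mp (hb ▸ le_vop))

theorem mul_ne_bot {P Q : Submodule R K} (hP : P ≠ ⊥) (hQ : Q ≠ ⊥) : P * Q ≠ ⊥ := by
  obtain ⟨x, hx, hx0⟩ := Submodule.exists_mem_ne_zero_of_ne_bot hP
  obtain ⟨y, hy, hy0⟩ := Submodule.exists_mem_ne_zero_of_ne_bot hQ
  intro hb
  have : x * y ∈ P * Q := Submodule.mul_mem_mul hx hy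
  rw [hb, Submodule.mem_bot] at this
  exact mul_ne_zero hx0 hy0 this

theorem top_eq_vop {F : Submodule R K} (hfg : F.FG) (hnz : F ≠ ⊥) : top R K F = vop R K F := by
  apply le_antisymm
  · exact iSup₂_le fun G hG => vop_mono hG.2.2
  · exact le_iSup_of_le F (le_iSup_of_le ⟨hfg, hnz, le_rfl⟩ le_rfl)

theorem gv_top_iff {F : Submodule R K} (hfg : F.FG) (hnz : F ≠ ⊥) :
    top R K F = 1 ↔ resid R K 1 F = 1 := by
  rw [top_eq_vop hfg hnz]
  constructor
  · intro h
    have h2 : resid R K 1 (vop R K F) = resid R K 1 F := resid_one_vop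
    rw [h, resid_one_one] at h2
    exact h2.symm
  · intro h
    unfold vop
    rw [h, resid_one_one]

/-- Glaz–Vasconcelos ideals. -/
def GV (F : Submodule R K) : Prop := F.FG ∧ F ≠ ⊥ ∧ resid R K 1 F = 1

theorem gv_iff {F : Submodule R K} : GV F ↔ (F.FG ∧ F ≠ ⊥ ∧ top R K F = 1) := by
  constructor
  · rintro ⟨h1, h2, h3⟩
    exact ⟨h1, h2, (gv_top_iff h1 h2).mpr h3⟩
  · rintro ⟨h1, h2, h3⟩
    exact ⟨h1, h2, (gv_top_iff h1 h2).mp h3⟩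

theorem gv_le_one {F : Submodule R K} (h : GV F) : F ≤ 1 := by
  intro x hx
  have h1 : (1 : K) ∈ resid R K 1 F := by rw [h.2.2]; exact one_mem_one
  simpa using h1 x hx

theorem gv_one : GV (1 : Submodule R K) := by
  refine ⟨?_, ?_, resid_one_one⟩
  · rw [Submodule.one_eq_span]
    exact Submodule.fg_span (Set.finite_singleton _)
  · intro hb
    have := one_mem_one (R := R) (K := K)
    rw [hb, Submodule.mem_bot] at this
    exact one_ne_zero this

theorem gv_mul {F G : Submodule R K} (hF : GV F) (hG : GV G) : GV (F * G) := by
  refine ⟨hF.1.mul hG.1, mul_ne_bot hF.2.1 hG.2.1, le_antisymm ?_ ?_⟩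
  · intro x hx
    rw [← hF.2.2]
    intro y hy
    rw [← hG.2.2]
    intro z hz
    rw [mul_assoc]
    exact hx _ (Submodule.mul_mem_mul hy hz)
  · exact one_le_resid_one (Submodule.mul_le.mpr fun f hf g hg =>
      mul_mem_one (gv_le_one hF hf) (gv_le_one hG hg))

theorem resid_le_resid_mul {E F G : Submodule R K} (hG : G ≤ 1) :
    resid R K E F ≤ resid R K E (F * G) := by
  intro x hx
  intro y hy
  refine Submodule.mul_induction_on hy (fun f hf g hg => ?_) (fun a b ha hb => ?_)
  · rw [show x * (f * g) = g * (x * f) by ring]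
    exact one_mul_mem (hG hg) (hx f hf)
  · rw [mul_add]
    exact E.add_mem ha hb

theorem wop_eq {E : Submodule R K} :
    wop R K E = ⨆ (F : Submodule R K) (_ : GV F), resid R K E F := by
  unfold wop
  apply iSup_congr
  intro F
  exact iSup_congr_Prop
    ⟨fun h => gv_iff.mpr ⟨h.1, h.2.1, h.2.2⟩, fun h => ⟨h.1, h.2.1, (gv_iff.mp h).2.2⟩⟩
    (fun _ => rfl)

theorem le_wop {E : Submodule R K} : E ≤ wop R K E := by
  rw [wop_eq]
  refine le_trans ?_ (le_iSup_of_le 1 (le_iSup_of_le gv_one le_rfl))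
  intro x hx y hy
  rw [mul_comm]
  exact one_mul_mem hy hx

theorem wop_ne_bot {E : Submodule R K} (h : E ≠ ⊥) : wop R K E ≠ ⊥ :=
  fun hb => h (le_bot_iff.mp (hb ▸ le_wop))

theorem wop_mono {E E' : Submodule R K} (h : E ≤ E') : wop R K E ≤ wop R K E' := by
  rw [wop_eq, wop_eq]
  exact iSup₂_mono fun F _ => resid_mono h

theorem wop_le_vop {E : Submodule R K} : wop R K E ≤ vop R K E := by
  rw [wop_eq]
  refine iSup₂_le fun F hF => ?_
  intro x hx y hy
  have hxy : x * y ∈ resid R K 1 F := by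
    intro z hz
    rw [show x * y * z = y * (x * z) by ring]
    exact hy _ (hx z hz)
  rw [hF.2.2] at hxy
  exact hxy

theorem wop_one : wop R K (1 : Submodule R K) = 1 := by
  apply le_antisymm
  · rw [wop_eq]
    exact iSup₂_le fun F hF => le_of_eq hF.2.2
  · exact le_wop (E := (1 : Submodule R K))

theorem resid_one_wop {E : Submodule R K} : resid R K 1 (wop R K E) = resid R K 1 E := by
  apply le_antisymm
  · exact resid_anti le_wop
  · calc resid R K 1 E = resid R K 1 (vop R K E) := resid_one_vop.symm
      _ ≤ resid R K 1 (wop R K E) := resid_anti wop_le_vop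

theorem mem_wop {E : Submodule R K} {x : K} :
    x ∈ wop R K E ↔ ∃ F : Submodule R K, GV F ∧ ∀ y ∈ F, x * y ∈ E := by
  have hsub : wop R K E = ⨆ F : {F : Submodule R K // GV F}, resid R K E F.1 := by
    rw [wop_eq]
    apply le_antisymm
    · exact iSup₂_le fun F hF => le_iSup_of_le ⟨F, hF⟩ le_rfl
    · exact iSup_le fun F => le_iSup₂_of_le F.1 F.2 le_rfl
  rw [hsub]
  haveI : Nonempty {F : Submodule R K // GV F} := ⟨⟨1, gv_one⟩⟩
  rw [Submodule.mem_iSup_of_directed]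
  · constructor
    · rintro ⟨⟨F, hF⟩, hx⟩
      exact ⟨F, hF, hx⟩
    · rintro ⟨F, hF, hx⟩
      exact ⟨⟨F, hF⟩, hx⟩
  · rintro ⟨F, hF⟩ ⟨G, hG⟩
    refine ⟨⟨F * G, gv_mul hF hG⟩, resid_le_resid_mul (gv_le_one hG), ?_⟩
    have h2 : resid R K E G ≤ resid R K E (G * F) := resid_le_resid_mul (gv_le_one hF)
    rw [mul_comm G F] at h2
    exact h2

theorem cic_resid_self (hc : CICsub R K) {E : Submodule R K} {e a : K}
    (he : e ∈ E) (he0 : e ≠ 0) (ha0 : a ≠ 0) (ha : ∀ y ∈ E, a * y ∈ (1 : Submodule R K)) :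
    resid R K E E = 1 := by
  apply le_antisymm
  · intro x hx
    apply hc
    obtain ⟨c, hc'⟩ := Submodule.mem_one.mp (ha e he)
    have hc0 : c ≠ 0 := by
      intro h
      rw [h, map_zero] at hc'
      exact mul_ne_zero ha0 he0 hc'.symm
    refine ⟨c, hc0, fun n => ?_⟩
    have hxn : x ^ n * e ∈ E := by
      induction n with
      | zero => simpa using he
      | succ n ih =>
        rw [pow_succ, show x ^ n * x * e = x * (x ^ n * e) by ring]
        exact hx _ ih
    have : c • x ^ n = a * (x ^ n * e) := by
      rw [Algebra.smul_def, hc']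
      ring
    rw [this]
    exact ha _ hxn
  · intro x hx y hy
    exact one_mul_mem hx hy

theorem cic_resid_one_mul (hc : CICsub R K) {E : Submodule R K} {a : K}
    (hE : E ≠ ⊥) (ha0 : a ≠ 0) (ha : ∀ y ∈ E, a * y ∈ (1 : Submodule R K)) :
    resid R K 1 (E * resid R K 1 E) = 1 := by
  obtain ⟨e, he, he0⟩ := Submodule.exists_mem_ne_zero_of_ne_bot hE
  have haF : a ∈ resid R K 1 E := ha
  have hFF : resid R K (resid R K 1 E) (resid R K 1 E) = 1 := by
    refine cic_resid_self hc haF ha0 he0 (fun y hy => ?_)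
    rw [mul_comm]
    exact hy e he
  apply le_antisymm
  · intro x hx
    have hx' : x ∈ resid R K (resid R K 1 E) (resid R K 1 E) := by
      intro y hy z hz
      rw [show x * y * z = x * (z * y) by ring]
      exact hx _ (Submodule.mul_mem_mul hz hy)
    rw [hFF] at hx'
    exact hx'
  · intro x hx y hy
    refine Submodule.mul_induction_on hy (fun m hm n hn => ?_) (fun u v hu hv => ?_)
    · rw [show x * (m * n) = x * (n * m) by ring]
      exact mul_mem_one hx (hn m hm)
    · rw [mul_add]
      exact Submodule.add_mem _ hu hv

/-- Mori property from the ACC on divisorial ideals. -/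
theorem mori
    (hacc : ∀ c : ℕ → Submodule R K,
      (∀ n, c n ≠ ⊥ ∧ c n ≤ 1 ∧ vop R K (c n) = c n) → Monotone c →
        ∃ n, ∀ m, n ≤ m → c m = c n)
    {A : Submodule R K} (hA : A ≠ ⊥) (hA1 : A ≤ 1) :
    ∃ F : Submodule R K, F.FG ∧ F ≠ ⊥ ∧ F ≤ A ∧ resid R K 1 F = resid R K 1 A := by
  by_cases hmax : ∃ F₀ : Submodule R K, (F₀.FG ∧ F₀ ≠ ⊥ ∧ F₀ ≤ A) ∧
      ∀ F : Submodule R K, (F.FG ∧ F ≠ ⊥ ∧ F ≤ A) → ¬ (vop R K F₀ < vop R K F)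
  · obtain ⟨F₀, h₀, hm⟩ := hmax
    have hAv : A ≤ vop R K F₀ := by
      intro x hx
      set F' := F₀ ⊔ Submodule.span R {x} with hF'
      have hF'p : F'.FG ∧ F' ≠ ⊥ ∧ F' ≤ A := by
        refine ⟨h₀.1.sup (Submodule.fg_span (Set.finite_singleton _)), ?_, ?_⟩
        · intro hb
          exact h₀.2.1 (le_bot_iff.mp (hb ▸ (le_sup_left : F₀ ≤ F')))
        · exact sup_le h₀.2.2 ((Submodule.span_singleton_le_iff_mem _ _).mpr hx)
      have hle : vop R K F₀ ≤ vop R K F' := vop_mono le_sup_left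
      have heq : vop R K F₀ = vop R K F' := hle.lt_or_eq.resolve_left (hm F' hF'p)
      have : x ∈ F' := (le_sup_right : Submodule.span R {x} ≤ F')
        (Submodule.mem_span_singleton_self x)
      exact heq ▸ (le_vop this)
    refine ⟨F₀, h₀.1, h₀.2.1, h₀.2.2, le_antisymm ?_ (resid_anti h₀.2.2)⟩
    calc resid R K 1 F₀ = resid R K 1 (vop R K F₀) := resid_one_vop.symm
      _ ≤ resid R K 1 A := resid_anti hAv
  · push_neg at hmax
    obtain ⟨a₀, ha₀, ha₀0⟩ := Submodule.exists_mem_ne_zero_of_ne_bot hA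
    have hbase : (Submodule.span R {a₀}).FG ∧ Submodule.span R {a₀} ≠ ⊥ ∧
        Submodule.span R {a₀} ≤ A :=
      ⟨Submodule.fg_span (Set.finite_singleton _),
        by simpa [Submodule.span_singleton_eq_bot] using ha₀0,
        (Submodule.span_singleton_le_iff_mem _ _).mpr ha₀⟩
    let T := {F : Submodule R K // F.FG ∧ F ≠ ⊥ ∧ F ≤ A}
    have step : ∀ F : T, ∃ F' : T, vop R K F.1 < vop R K F'.1 := by
      rintro ⟨F, hF⟩
      obtain ⟨F', hF', hlt⟩ := hmax F hF
      exact ⟨⟨F', hF'⟩, hlt⟩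
    choose g hg using step
    let seq : ℕ → T := fun n => g^[n] ⟨_, hbase⟩
    have hstrict : ∀ n, vop R K (seq n).1 < vop R K (seq (n + 1)).1 := by
      intro n
      have : seq (n + 1) = g (seq n) := Function.iterate_succ_apply' g n _
      rw [this]
      exact hg (seq n)
    have := hacc (fun n => vop R K (seq n).1)
      (fun n => ⟨vop_ne_bot (seq n).2.2.1, vop_le_one ((seq n).2.2.2.trans hA1), vop_idem⟩)
      (monotone_nat_of_le_succ fun n => (hstrict n).le)
    obtain ⟨n, hn⟩ := this
    exact absurd (hn (n + 1) (Nat.le_succ n)) (hstrict n).ne'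

/-- Decomposition of a f.g. submodule of a product. -/
theorem fg_le_mul {F P Q : Submodule R K} (hF : F.FG) (h : F ≤ P * Q) :
    ∃ A B : Submodule R K, A.FG ∧ B.FG ∧ A ≤ P ∧ B ≤ Q ∧ F ≤ A * B := by
  have key : ∀ x ∈ P * Q, ∃ A B : Submodule R K,
      A.FG ∧ B.FG ∧ A ≤ P ∧ B ≤ Q ∧ x ∈ A * B := by
    intro x hx
    refine Submodule.mul_induction_on hx (fun p hp q hq => ?_) ?_
    · exact ⟨Submodule.span R {p}, Submodule.span R {q},
        Submodule.fg_span (Set.finite_singleton _), Submodule.fg_span (Set.finite_singleton _),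
        (Submodule.span_singleton_le_iff_mem _ _).mpr hp,
        (Submodule.span_singleton_le_iff_mem _ _).mpr hq,
        Submodule.mul_mem_mul (Submodule.mem_span_singleton_self _)
          (Submodule.mem_span_singleton_self _)⟩
    · rintro x y ⟨A, B, hAfg, hBfg, hAP, hBQ, hx'⟩ ⟨A', B', hA'fg, hB'fg, hA'P, hB'Q, hy'⟩
      refine ⟨A ⊔ A', B ⊔ B', hAfg.sup hA'fg, hBfg.sup hB'fg,
        sup_le hAP hA'P, sup_le hBQ hB'Q, Submodule.add_mem _ ?_ ?_⟩
      · exact (mul_le_mul' le_sup_left le_sup_left : A * B ≤ (A ⊔ A') * (B ⊔ B')) hx'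
      · exact (mul_le_mul' le_sup_right le_sup_right : A' * B' ≤ (A ⊔ A') * (B ⊔ B')) hy'
  obtain ⟨s, rfl⟩ := hF
  classical
  induction s using Finset.induction_on with
  | empty =>
    exact ⟨⊥, ⊥, Submodule.fg_bot, Submodule.fg_bot, bot_le, bot_le,
      by simp⟩
  | @insert a s ha ih =>
    have hsub : Submodule.span R (s : Set K) ≤ P * Q := by
      refine le_trans ?_ h
      exact Submodule.span_mono (by simp [Finset.coe_insert, Set.subset_insert])
    obtain ⟨A, B, hAfg, hBfg, hAP, hBQ, hle⟩ := ih hsub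
    have haPQ : a ∈ P * Q := h (Submodule.subset_span (by simp))
    obtain ⟨A', B', hA'fg, hB'fg, hA'P, hB'Q, ha'⟩ := key a haPQ
    refine ⟨A ⊔ A', B ⊔ B', hAfg.sup hA'fg, hBfg.sup hB'fg,
      sup_le hAP hA'P, sup_le hBQ hB'Q, ?_⟩
    rw [Finset.coe_insert, Submodule.span_insert]
    refine sup_le ?_ ?_
    · rw [Submodule.span_singleton_le_iff_mem]
      exact (mul_le_mul' le_sup_right le_sup_right : A' * B' ≤ (A ⊔ A') * (B ⊔ B')) ha'
    · exact hle.trans (mul_le_mul' le_sup_left le_sup_left)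

theorem mul_le_iff_le_resid {X G U : Submodule R K} : X * G ≤ U ↔ X ≤ resid R K U G := by
  constructor
  · intro h x hx y hy
    exact h (Submodule.mul_mem_mul hx hy)
  · intro h
    exact Submodule.mul_le.mpr fun x hx y hy => h hx y hy

theorem fg_le_wop {A' U : Submodule R K} (hfg : A'.FG) (h : A' ≤ wop R K U) :
    ∃ G : Submodule R K, GV G ∧ A' * G ≤ U := by
  obtain ⟨s, rfl⟩ := hfg
  classical
  induction s using Finset.induction_on with
  | empty => exact ⟨1, gv_one, by simp⟩
  | @insert a s ha ih =>
    have hsub : Submodule.span R (s : Set K) ≤ wop R K U :=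
      le_trans (Submodule.span_mono (by simp [Finset.coe_insert, Set.subset_insert])) h
    obtain ⟨G, hG, hle⟩ := ih hsub
    have haw : a ∈ wop R K U := h (Submodule.subset_span (by simp))
    obtain ⟨Ga, hGa, hamem⟩ := mem_wop.mp haw
    refine ⟨Ga * G, gv_mul hGa hG, ?_⟩
    rw [mul_le_iff_le_resid, Finset.coe_insert, Submodule.span_insert]
    refine sup_le ?_ ?_
    · rw [Submodule.span_singleton_le_iff_mem]
      exact resid_le_resid_mul (gv_le_one hG) hamem
    · have h1 : Submodule.span R (s : Set K) ≤ resid R K U G := mul_le_iff_le_resid.mp hle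
      have h2 : resid R K U G ≤ resid R K U (G * Ga) := resid_le_resid_mul (gv_le_one hGa)
      rw [mul_comm G Ga] at h2
      exact h1.trans h2

theorem fg_le_chain {A : Submodule R K} (hfg : A.FG) {c : ℕ → Submodule R K}
    (hm : Monotone c) (h : A ≤ ⨆ n, c n) : ∃ N, A ≤ c N := by
  obtain ⟨s, rfl⟩ := hfg
  classical
  induction s using Finset.induction_on with
  | empty => exact ⟨0, by simp⟩
  | @insert a s ha ih =>
    have hsub : Submodule.span R (s : Set K) ≤ ⨆ n, c n :=
      le_trans (Submodule.span_mono (by simp [Finset.coe_insert, Set.subset_insert])) h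
    obtain ⟨N, hN⟩ := ih hsub
    have haw : a ∈ ⨆ n, c n := h (Submodule.subset_span (by simp))
    obtain ⟨M, hM⟩ := (Submodule.mem_iSup_of_directed c hm.directed_le).mp haw
    refine ⟨max N M, ?_⟩
    rw [Finset.coe_insert, Submodule.span_insert]
    refine sup_le ?_ (hN.trans (hm (le_max_left N M)))
    rw [Submodule.span_singleton_le_iff_mem]
    exact hm (le_max_right N M) hM

theorem krull_imp_wstable (hk : IsKrullSub R K) : WStable R K := by
  obtain ⟨hcic, hacc⟩ := hk
  intro I hI hI1
  have hw1 : wop R K I ≤ 1 := (wop_mono hI1).trans (le_of_eq wop_one)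
  obtain ⟨e, he, he0⟩ := Submodule.exists_mem_ne_zero_of_ne_bot (wop_ne_bot hI)
  have hEE : resid R K (wop R K I) (wop R K I) = 1 :=
    cic_resid_self hcic he he0 one_ne_zero (fun y hy => by rw [one_mul]; exact hw1 hy)
  rw [hEE, resid_one_wop]
  have hR1I : (1 : K) ∈ resid R K 1 I := fun y hy => by rw [one_mul]; exact hI1 hy
  have hmul1 : wop R K I * resid R K 1 I ≤ 1 := by
    refine Submodule.mul_le.mpr fun m hm n hn => ?_
    have hn' : n ∈ resid R K 1 (wop R K I) := by rw [resid_one_wop]; exact hn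
    rw [mul_comm]
    exact hn' m hm
  apply le_antisymm
  · exact (wop_mono hmul1).trans (le_of_eq wop_one)
  · have hRInz : resid R K 1 I ≠ ⊥ := fun hb =>
      one_ne_zero (α := K) (by rw [hb] at hR1I; simpa using hR1I)
    have hAnz : I * resid R K 1 I ≠ ⊥ := mul_ne_bot hI hRInz
    have hA1 : I * resid R K 1 I ≤ 1 := Submodule.mul_le.mpr fun m hm n hn => by
      rw [mul_comm]; exact hn m hm
    have hRA : resid R K 1 (I * resid R K 1 I) = 1 :=
      cic_resid_one_mul hcic hI one_ne_zero (fun y hy => by rw [one_mul]; exact hI1 hy)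
    obtain ⟨F₀, hfg, hnz, hle, hres⟩ := mori hacc hAnz hA1
    have hGV : GV F₀ := ⟨hfg, hnz, by rw [hres, hRA]⟩
    have h1mem : (1 : K) ∈ wop R K (wop R K I * resid R K 1 I) := by
      refine mem_wop.mpr ⟨F₀, hGV, fun y hy => ?_⟩
      rw [one_mul]
      exact mul_le_mul' le_wop le_rfl (hle hy)
    intro x hx
    obtain ⟨r, rfl⟩ := Submodule.mem_one.mp hx
    have := Submodule.smul_mem _ r h1mem
    simpa [Algebra.smul_def] using this

theorem krull_imp_wdiv (hk : IsKrullSub R K) : WDivisorial R K := by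
  obtain ⟨hcic, hacc⟩ := hk
  rintro J hJ ⟨d, hd0, hd⟩
  apply le_antisymm wop_le_vop
  intro x hx
  have hd0' : algebraMap R K d ≠ 0 := fun h =>
    hd0 ((IsFractionRing.injective R K) (by rw [map_zero]; exact h))
  have ha : ∀ y ∈ J, algebraMap R K d * y ∈ (1 : Submodule R K) := fun y hy => by
    rw [← Algebra.smul_def]; exact hd y hy
  have haF : algebraMap R K d ∈ resid R K 1 J := fun y hy => ha y hy
  have hRJnz : resid R K 1 J ≠ ⊥ := fun hb =>
    hd0' (by rw [hb] at haF; simpa using haF)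
  have hJ1 : J * resid R K 1 J ≤ 1 := Submodule.mul_le.mpr fun m hm n hn => by
    rw [mul_comm]; exact hn m hm
  have hAnz : J * resid R K 1 J ≠ ⊥ := mul_ne_bot hJ hRJnz
  have hRA : resid R K 1 (J * resid R K 1 J) = 1 := cic_resid_one_mul hcic hJ hd0' ha
  obtain ⟨F₀, hfg, hnz, hle, hres⟩ := mori hacc hAnz hJ1
  have hGV : GV F₀ := ⟨hfg, hnz, by rw [hres, hRA]⟩
  refine mem_wop.mpr ⟨F₀, hGV, fun y hy => ?_⟩
  refine Submodule.mul_induction_on (hle hy) (fun m hm n hn => ?_) (fun u v hu hv => ?_)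
  · rw [show x * (m * n) = x * n * m by ring]
    exact one_mul_mem (hx n hn) hm
  · rw [mul_add]
    exact J.add_mem hu hv

theorem wstable_imp_krull (hcic : CICsub R K) (hst : WStable R K) : IsKrullSub R K := by
  refine ⟨hcic, fun c hc hmono => ?_⟩
  set U := ⨆ n, c n with hU
  have hUnz : U ≠ ⊥ := fun hb => (hc 0).1 (le_bot_iff.mp ((le_iSup c 0).trans hb.le))
  have hU1 : U ≤ 1 := iSup_le fun n => (hc n).2.1
  have hw1 : wop R K U ≤ 1 := (wop_mono hU1).trans (le_of_eq wop_one)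
  obtain ⟨e, he, he0⟩ := Submodule.exists_mem_ne_zero_of_ne_bot (wop_ne_bot hUnz)
  have hEE : resid R K (wop R K U) (wop R K U) = 1 :=
    cic_resid_self hcic he he0 one_ne_zero (fun y hy => by rw [one_mul]; exact hw1 hy)
  have hst' := hst U hUnz hU1
  rw [hEE, resid_one_wop] at hst'
  have h1mem : (1 : K) ∈ wop R K (wop R K U * resid R K 1 U) := by
    rw [hst']; exact one_mem_one
  obtain ⟨F, hGVF, hF⟩ := mem_wop.mp h1mem
  have hFle : F ≤ wop R K U * resid R K 1 U := fun y hy => by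
    have := hF y hy
    rwa [one_mul] at this
  obtain ⟨A', B, hA'fg, hBfg, hA'le, hBle, hFAB⟩ := fg_le_mul hGVF.1 hFle
  obtain ⟨G, hGVG, hA'G⟩ := fg_le_wop hA'fg hA'le
  have hAfg : (A' * G).FG := hA'fg.mul hGVG.1
  have hAU : A' * G ≤ U := hA'G
  have key : resid R K 1 (A' * G) = resid R K 1 U := by
    apply le_antisymm
    · intro x hx u hu
      have hxA' : ∀ a' ∈ A', x * a' ∈ (1 : Submodule R K) := by
        intro a' ha'
        rw [← hGVG.2.2]
        intro g hg
        rw [mul_assoc]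
        exact hx _ (Submodule.mul_mem_mul ha' hg)
      have hxu : x * u ∈ resid R K 1 F := by
        intro y hy
        refine Submodule.mul_induction_on (hFAB hy) (fun m hm n hn => ?_) (fun p q hp hq => ?_)
        · rw [show x * u * (m * n) = x * m * (n * u) by ring]
          exact mul_mem_one (hxA' m hm) (hBle hn u hu)
        · rw [mul_add]
          exact Submodule.add_mem _ hp hq
      rw [hGVF.2.2] at hxu
      exact hxu
    · exact resid_anti hAU
  obtain ⟨N, hN⟩ := fg_le_chain hAfg hmono hAU
  refine ⟨N, fun m hm => ?_⟩
  refine le_antisymm ?_ (hmono hm)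
  have h2 : vop R K U = vop R K (A' * G) := by
    unfold vop
    rw [key]
  have h3 : vop R K (A' * G) ≤ vop R K (c N) := vop_mono hN
  rw [(hc N).2.2] at h3
  exact (le_iSup c m).trans ((le_vop).trans (h2 ▸ h3))

theorem wdiv_imp_krull (hcic : CICsub R K) (hd : WDivisorial R K) : IsKrullSub R K := by
  refine ⟨hcic, fun c hc hmono => ?_⟩
  set U := ⨆ n, c n with hU
  have hUnz : U ≠ ⊥ := fun hb => (hc 0).1 (le_bot_iff.mp ((le_iSup c 0).trans hb.le))
  have hU1 : U ≤ 1 := iSup_le fun n => (hc n).2.1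
  have hR1U : (1 : K) ∈ resid R K 1 U := fun y hy => by rw [one_mul]; exact hU1 hy
  have hRUnz : resid R K 1 U ≠ ⊥ := fun hb =>
    one_ne_zero (α := K) (by rw [hb] at hR1U; simpa using hR1U)
  have hJnz : U * resid R K 1 U ≠ ⊥ := mul_ne_bot hUnz hRUnz
  have hJ1 : U * resid R K 1 U ≤ 1 := Submodule.mul_le.mpr fun m hm n hn => by
    rw [mul_comm]; exact hn m hm
  have hwv := hd (U * resid R K 1 U) hJnz
    ⟨1, one_ne_zero, fun x hx => by simpa using hJ1 hx⟩
  have hRJ : resid R K 1 (U * resid R K 1 U) = 1 :=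
    cic_resid_one_mul hcic hUnz one_ne_zero (fun y hy => by rw [one_mul]; exact hU1 hy)
  have hvJ : vop R K (U * resid R K 1 U) = 1 := by
    unfold vop
    rw [hRJ, resid_one_one]
  rw [hvJ] at hwv
  have h1mem : (1 : K) ∈ wop R K (U * resid R K 1 U) := by rw [hwv]; exact one_mem_one
  obtain ⟨F, hGVF, hF⟩ := mem_wop.mp h1mem
  have hFle : F ≤ U * resid R K 1 U := fun y hy => by
    have := hF y hy
    rwa [one_mul] at this
  obtain ⟨A, B, hAfg, hBfg, hAle, hBle, hFAB⟩ := fg_le_mul hGVF.1 hFle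
  have key : resid R K 1 A = resid R K 1 U := by
    apply le_antisymm
    · intro x hx u hu
      have hxu : x * u ∈ resid R K 1 F := by
        intro y hy
        refine Submodule.mul_induction_on (hFAB hy) (fun m hm n hn => ?_) (fun p q hp hq => ?_)
        · rw [show x * u * (m * n) = x * m * (n * u) by ring]
          exact mul_mem_one (hx m hm) (hBle hn u hu)
        · rw [mul_add]
          exact Submodule.add_mem _ hp hq
      rw [hGVF.2.2] at hxu
      exact hxu
    · exact resid_anti hAle
  obtain ⟨N, hN⟩ := fg_le_chain hAfg hmono hAle
  refine ⟨N, fun m hm => ?_⟩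
  refine le_antisymm ?_ (hmono hm)
  have h2 : vop R K U = vop R K A := by
    unfold vop
    rw [key]
  have h3 : vop R K A ≤ vop R K (c N) := vop_mono hN
  rw [(hc N).2.2] at h3
  exact (le_iSup c m).trans ((le_vop).trans (h2 ▸ h3))

end P15


/-- `R` is completely integrally closed and `w`-stable iff `R` is
a Krull domain; equivalently, `R` is completely integrally closed and
`w`-divisorial iff `R` is a Krull domain. -/
theorem statement_15 {R K : Type*} [CommRing R] [IsDomain R] [Field K] [Algebra R K]
    [IsFractionRing R K] :
    ((CICsub R K ∧ WStable R K) ↔ IsKrullSub R K) ∧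
    ((CICsub R K ∧ WDivisorial R K) ↔ IsKrullSub R K) := by
  constructor
  · exact ⟨fun h => P15.wstable_imp_krull h.1 h.2,
      fun hk => ⟨hk.1, P15.krull_imp_wstable hk⟩⟩
  · exact ⟨fun h => P15.wdiv_imp_krull h.1 h.2,
      fun hk => ⟨hk.1, P15.krull_imp_wdiv hk⟩⟩
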